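/- (Identify step bound) Let v = x − x^ℓ where both x and x^ℓ are k-sparse in D, let ṽ = A*Av + A*e, and let Ω = S_D(ṽ, 2k) be a near-optimal support of size 2k for ṽ with parameter ε₁. If A satisfies the D-RIP of order 4k with constant δ_{4k}, then ‖P_{Ω⊥} v‖ ≤ ((2+ε₁)δ_{4k} + ε₁)‖v‖ + (2+ε₁)√(1+δ_{4k})‖e‖. -/

import Mathlib

noncomputable section

abbrev Vec (n : ℕ) := EuclideanSpace ℂ (Fin n)

/-- Span of the columns of `D` indexed by `B`. -/
def colSpan {n d : ℕ} (D : Vec d →L[ℂ] Vec n) (B : Finset (Fin d)) : Submodule ℂ (Vec n) :=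
  Submodule.span ℂ ((fun j => D (EuclideanSpace.single j 1)) '' (B : Set (Fin d)))

/-- Orthogonal projection onto the span of the columns of `D` indexed by `B`. -/
def P {n d : ℕ} (D : Vec d →L[ℂ] Vec n) (B : Finset (Fin d)) (z : Vec n) : Vec n :=
  (Submodule.orthogonalProjection (colSpan D B) z : Vec n)

open Classical in
/-- `α` has at most `k` nonzero entries. -/
def sparse {d : ℕ} (k : ℕ) (α : Vec d) : Prop :=
  (Finset.univ.filter fun i => α i ≠ 0).card ≤ k

/-- `A` satisfies the `D`-RIP of order `k` with constant `δ`. -/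
def DRIP {m n d : ℕ} (A : Vec n →L[ℂ] Vec m) (D : Vec d →L[ℂ] Vec n) (k : ℕ) (δ : ℝ) : Prop :=
  ∀ α : Vec d, sparse k α →
    Real.sqrt (1 - δ) * ‖D α‖ ≤ ‖A (D α)‖ ∧ ‖A (D α)‖ ≤ Real.sqrt (1 + δ) * ‖D α‖

open scoped InnerProductSpace

namespace Aux
variable {m n d : ℕ}

def coeffs (B : Finset (Fin d)) : Submodule ℂ (Vec d) where
  carrier := {γ | ∀ i, i ∉ B → γ i = 0}
  add_mem' := by
    intro a b ha hb i hi
    show a i + b i = 0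
    rw [ha i hi, hb i hi, add_zero]
  zero_mem' := fun i _ => rfl
  smul_mem' := by
    intro c a ha i hi
    show c * a i = 0
    rw [ha i hi, mul_zero]

lemma sum_single (γ : Vec d) (B : Finset (Fin d)) (h : ∀ i, i ∉ B → γ i = 0) :
    γ = ∑ j ∈ B, γ j • EuclideanSpace.single j (1:ℂ) := by
  ext i
  have : (∑ j ∈ B, γ j • EuclideanSpace.single j (1:ℂ)) i
      = ∑ j ∈ B, γ j * (if i = j then (1:ℂ) else 0) := by
    rw [WithLp.ofLp_sum, Finset.sum_apply]
    exact Finset.sum_congr rfl fun j _ => by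
      show γ j * (EuclideanSpace.single j (1:ℂ)) i = _
      rw [EuclideanSpace.single_apply]
  rw [this]
  simp only [mul_ite, mul_one, mul_zero]
  rw [Finset.sum_ite_eq B i (fun j => γ j)]
  by_cases hi : i ∈ B
  · simp [hi]
  · simp [hi, h i hi]

lemma mem_colSpan_of (D : Vec d →L[ℂ] Vec n) {B : Finset (Fin d)} {γ : Vec d}
    (h : ∀ i, i ∉ B → γ i = 0) : D γ ∈ colSpan D B := by
  rw [sum_single γ B h, map_sum]
  refine Submodule.sum_mem _ fun j hj => ?_
  rw [map_smul]
  exact Submodule.smul_mem _ _ (Submodule.subset_span ⟨j, hj, rfl⟩)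

lemma exists_of_mem_colSpan (D : Vec d →L[ℂ] Vec n) {B : Finset (Fin d)} {z : Vec n}
    (h : z ∈ colSpan D B) : ∃ γ : Vec d, (∀ i, i ∉ B → γ i = 0) ∧ D γ = z := by
  have hle : colSpan D B ≤ (coeffs B).map (D : Vec d →ₗ[ℂ] Vec n) := by
    apply Submodule.span_le.2
    rintro _ ⟨j, hj, rfl⟩
    refine ⟨EuclideanSpace.single j 1, fun i hi => ?_, rfl⟩
    rw [EuclideanSpace.single_apply]
    have : i ≠ j := fun hij => hi (hij ▸ hj)
    simp [this]
  obtain ⟨γ, hγ, rfl⟩ := hle h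
  exact ⟨γ, hγ, rfl⟩

lemma sparse_of_support {k' : ℕ} {B : Finset (Fin d)} {γ : Vec d}
    (h : ∀ i, i ∉ B → γ i = 0) (hB : B.card ≤ k') : sparse k' γ := by
  classical
  refine le_trans (Finset.card_le_card ?_) hB
  intro i hi
  rw [Finset.mem_filter] at hi
  by_contra hib
  exact hi.2 (h i hib)

lemma colSpan_mono (D : Vec d →L[ℂ] Vec n) {B B' : Finset (Fin d)} (h : B ⊆ B') :
    colSpan D B ≤ colSpan D B' :=
  Submodule.span_mono (Set.image_mono (Finset.coe_subset.2 h))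


variable {m n d kk : ℕ} {A : Vec n →L[ℂ] Vec m} {D : Vec d →L[ℂ] Vec n} {δ : ℝ}

lemma le_of_sq_le_sq {a b : ℝ} (ha : 0 ≤ a) (hb : 0 ≤ b) (h : a^2 ≤ b^2) : a ≤ b := by
  nlinarith

lemma rip_sq_upper (hRIP : DRIP A D kk δ) (hδ : 0 ≤ δ) {γ : Vec d} (hγ : sparse kk γ) :
    ‖A (D γ)‖ ^ 2 ≤ (1 + δ) * ‖D γ‖ ^ 2 := by
  have h := (hRIP γ hγ).2
  have h2 : ‖A (D γ)‖^2 ≤ (Real.sqrt (1+δ) * ‖D γ‖)^2 :=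
    pow_le_pow_left₀ (norm_nonneg _) h 2
  rwa [mul_pow, Real.sq_sqrt (by linarith)] at h2

lemma rip_sq_lower (hRIP : DRIP A D kk δ) {γ : Vec d} (hγ : sparse kk γ) :
    (1 - δ) * ‖D γ‖^2 ≤ ‖A (D γ)‖^2 := by
  rcases le_or_gt (1 - δ) 0 with h|h
  · nlinarith [norm_nonneg (A (D γ)), sq_nonneg ‖D γ‖, sq_nonneg ‖A (D γ)‖]
  · have h1 := (hRIP γ hγ).1
    have h2 : (Real.sqrt (1-δ) * ‖D γ‖)^2 ≤ ‖A (D γ)‖^2 :=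
      pow_le_pow_left₀ (by positivity) h1 2
    rwa [mul_pow, Real.sq_sqrt h.le] at h2

lemma rip_re_bound (hRIP : DRIP A D kk δ) (hδ : 0 ≤ δ)
    {γ₁ γ₂ : Vec d} (hsum : sparse kk (γ₁ + γ₂)) (hdiff : sparse kk (γ₁ - γ₂)) :
    RCLike.re (⟪A (D γ₁), A (D γ₂)⟫_ℂ) - RCLike.re (⟪D γ₁, D γ₂⟫_ℂ)
      ≤ δ / 2 * (‖D γ₁‖^2 + ‖D γ₂‖^2) := by
  have pol : ∀ (N : ℕ) (x y : Vec N),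
      4 * RCLike.re (⟪x, y⟫_ℂ) = ‖x+y‖^2 - ‖x-y‖^2 := by
    intro N x y
    have h1 := @norm_add_sq ℂ _ _ _ _ x y
    have h2 := @norm_sub_sq ℂ _ _ _ _ x y
    linarith
  have hA1 : A (D γ₁) + A (D γ₂) = A (D (γ₁ + γ₂)) := by rw [map_add, map_add]
  have hA2 : A (D γ₁) - A (D γ₂) = A (D (γ₁ - γ₂)) := by rw [map_sub, map_sub]
  have hD1 : D γ₁ + D γ₂ = D (γ₁ + γ₂) := by rw [map_add]
  have hD2 : D γ₁ - D γ₂ = D (γ₁ - γ₂) := by rw [map_sub]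
  have p1 := pol m (A (D γ₁)) (A (D γ₂))
  have p2 := pol n (D γ₁) (D γ₂)
  rw [hA1, hA2] at p1
  rw [hD1, hD2] at p2
  have u1 := rip_sq_upper hRIP hδ hsum
  have l1 := rip_sq_lower hRIP hdiff
  have par : ‖D (γ₁+γ₂)‖*‖D (γ₁+γ₂)‖ + ‖D (γ₁-γ₂)‖*‖D (γ₁-γ₂)‖
      = 2*(‖D γ₁‖*‖D γ₁‖ + ‖D γ₂‖*‖D γ₂‖) := by
    rw [← hD1, ← hD2]; have := parallelogram_law_with_norm ℂ (D γ₁) (D γ₂); simp only [sq] at this; exact this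
  nlinarith [sq_nonneg ‖D (γ₁+γ₂)‖, sq_nonneg ‖D (γ₁-γ₂)‖]


lemma rip_re_inner_bound (hRIP : DRIP A D kk δ) (hδ : 0 ≤ δ) {Γ₁ Γ₂ : Finset (Fin d)}
    (hcard : (Γ₁ ∪ Γ₂).card ≤ kk)
    {γ₁ γ₂ : Vec d} (hs₁ : ∀ i, i ∉ Γ₁ → γ₁ i = 0) (hs₂ : ∀ i, i ∉ Γ₂ → γ₂ i = 0) :
    RCLike.re (⟪A (D γ₁), A (D γ₂)⟫_ℂ - ⟪D γ₁, D γ₂⟫_ℂ) ≤ δ * ‖D γ₁‖ * ‖D γ₂‖ := by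
  set a := ‖D γ₁‖ with ha
  set b := ‖D γ₂‖ with hb
  have ha0 : 0 ≤ a := norm_nonneg _
  have hb0 : 0 ≤ b := norm_nonneg _
  rcases eq_or_lt_of_le ha0 with h0|hapos
  · have hz : D γ₁ = 0 := norm_eq_zero.1 h0.symm
    rw [hz]
    simp only [map_zero, inner_zero_left, ContinuousLinearMap.map_zero, sub_zero, sub_self]
    exact le_trans (by simp) (mul_nonneg (mul_nonneg hδ ha0) hb0)
  rcases eq_or_lt_of_le hb0 with h0|hbpos
  · have hz : D γ₂ = 0 := norm_eq_zero.1 h0.symm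
    rw [hz]
    simp only [map_zero, inner_zero_right, ContinuousLinearMap.map_zero, sub_zero, sub_self]
    exact le_trans (by simp) (mul_nonneg (mul_nonneg hδ ha0) hb0)
  -- scale γ₁ by (b/a)
  set μ : ℂ := ((b/a : ℝ) : ℂ) with hμ
  set γ₁' : Vec d := μ • γ₁ with hγ₁'
  have hs₁' : ∀ i, i ∉ Γ₁ → γ₁' i = 0 := by
    intro i hi
    show μ * γ₁ i = 0
    rw [hs₁ i hi, mul_zero]
  have hsub₁ : Γ₁ ⊆ Γ₁ ∪ Γ₂ := Finset.subset_union_left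
  have hsub₂ : Γ₂ ⊆ Γ₁ ∪ Γ₂ := Finset.subset_union_right
  have hsum : sparse kk (γ₁' + γ₂) := by
    refine sparse_of_support (fun i hi => ?_) hcard
    show γ₁' i + γ₂ i = 0
    rw [hs₁' i (fun h => hi (hsub₁ h)), hs₂ i (fun h => hi (hsub₂ h)), add_zero]
  have hdiff : sparse kk (γ₁' - γ₂) := by
    refine sparse_of_support (fun i hi => ?_) hcard
    show γ₁' i - γ₂ i = 0
    rw [hs₁' i (fun h => hi (hsub₁ h)), hs₂ i (fun h => hi (hsub₂ h)), sub_zero]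
  have key := rip_re_bound hRIP hδ hsum hdiff
  have hDs : D γ₁' = μ • D γ₁ := by rw [hγ₁', map_smul]
  have hAs : A (D γ₁') = μ • A (D γ₁) := by rw [hDs, map_smul]
  have hnorm : ‖D γ₁'‖ = b := by
    rw [hDs, norm_smul, hμ]
    rw [Complex.norm_real, Real.norm_eq_abs, abs_of_pos (div_pos hbpos hapos), ← ha]
    field_simp
  have hinner1 : ⟪A (D γ₁'), A (D γ₂)⟫_ℂ = μ * ⟪A (D γ₁), A (D γ₂)⟫_ℂ := by
    rw [hAs, inner_smul_left, hμ, Complex.conj_ofReal]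
  have hinner2 : ⟪D γ₁', D γ₂⟫_ℂ = μ * ⟪D γ₁, D γ₂⟫_ℂ := by
    rw [hDs, inner_smul_left, hμ, Complex.conj_ofReal]
  rw [hinner1, hinner2, hnorm] at key
  have hre : ∀ z : ℂ, RCLike.re (μ * z) = (b/a) * RCLike.re z := by
    intro z
    rw [hμ]
    show (((b/a : ℝ) : ℂ) * z).re = (b/a) * z.re
    simp [Complex.mul_re]
  rw [hre, hre] at key
  have goal2 : (b/a) * (RCLike.re (⟪A (D γ₁), A (D γ₂)⟫_ℂ) - RCLike.re (⟪D γ₁, D γ₂⟫_ℂ))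
      ≤ δ * b * b := by
    have := key
    ring_nf at this ⊢
    linarith [this]
  have hfin : RCLike.re (⟪A (D γ₁), A (D γ₂)⟫_ℂ) - RCLike.re (⟪D γ₁, D γ₂⟫_ℂ) ≤ δ * a * b := by
    have hba : 0 < b / a := div_pos hbpos hapos
    refine le_of_mul_le_mul_left ?_ hba
    calc (b/a) * (RCLike.re (⟪A (D γ₁), A (D γ₂)⟫_ℂ) - RCLike.re (⟪D γ₁, D γ₂⟫_ℂ))
        ≤ δ * b * b := goal2
      _ = (b/a) * (δ * a * b) := by field_simp
  calc RCLike.re (⟪A (D γ₁), A (D γ₂)⟫_ℂ - ⟪D γ₁, D γ₂⟫_ℂ)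
      = RCLike.re (⟪A (D γ₁), A (D γ₂)⟫_ℂ) - RCLike.re (⟪D γ₁, D γ₂⟫_ℂ) := by
        rw [map_sub]
    _ ≤ δ * a * b := hfin


lemma P_mem (D : Vec d →L[ℂ] Vec n) (B : Finset (Fin d)) (z : Vec n) :
    P D B z ∈ colSpan D B := SetLike.coe_mem _

lemma P_inner (D : Vec d →L[ℂ] Vec n) (B : Finset (Fin d)) (z : Vec n) {w : Vec n}
    (hw : w ∈ colSpan D B) : ⟪z - P D B z, w⟫_ℂ = 0 :=
  Submodule.starProjection_inner_eq_zero (K := colSpan D B) z w hw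

lemma P_sub (D : Vec d →L[ℂ] Vec n) (B : Finset (Fin d)) (x y : Vec n) :
    P D B (x - y) = P D B x - P D B y := by
  simp [P, map_sub]

lemma P_add (D : Vec d →L[ℂ] Vec n) (B : Finset (Fin d)) (x y : Vec n) :
    P D B (x + y) = P D B x + P D B y := by
  simp [P, map_add]

lemma P_zero (D : Vec d →L[ℂ] Vec n) (B : Finset (Fin d)) : P D B 0 = 0 := by
  simp [P]

lemma P_eq_self (D : Vec d →L[ℂ] Vec n) (B : Finset (Fin d)) {z : Vec n}
    (h : z ∈ colSpan D B) : P D B z = z :=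
  (Submodule.starProjection_eq_self_iff (K := colSpan D B)).2 h

lemma pyth {N : ℕ} {x y : Vec N} (h : ⟪x, y⟫_ℂ = 0) : ‖x + y‖^2 = ‖x‖^2 + ‖y‖^2 := by
  have := @norm_add_sq ℂ _ _ _ _ x y
  rw [h] at this
  simpa using this

lemma P_pyth (D : Vec d →L[ℂ] Vec n) (B : Finset (Fin d)) (z : Vec n) :
    ‖z‖^2 = ‖z - P D B z‖^2 + ‖P D B z‖^2 := by
  have h := pyth (P_inner D B z (P_mem D B z))
  rw [sub_add_cancel] at h
  exact h

lemma norm_P_le (D : Vec d →L[ℂ] Vec n) (B : Finset (Fin d)) (z : Vec n) :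
    ‖P D B z‖ ≤ ‖z‖ := by
  have h := P_pyth D B z
  exact le_of_sq_le_sq (norm_nonneg _) (norm_nonneg _) (by nlinarith [sq_nonneg ‖z - P D B z‖])

lemma P_min (D : Vec d →L[ℂ] Vec n) (B : Finset (Fin d)) (z : Vec n) {w : Vec n}
    (hw : w ∈ colSpan D B) : ‖z - P D B z‖ ≤ ‖z - w‖ := by
  have hmem : P D B z - w ∈ colSpan D B := Submodule.sub_mem _ (P_mem D B z) hw
  have h := pyth (P_inner D B z hmem)
  rw [show z - P D B z + (P D B z - w) = z - w by abel] at h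
  exact le_of_sq_le_sq (norm_nonneg _) (norm_nonneg _) (by nlinarith [sq_nonneg ‖P D B z - w‖])

lemma P_nested_sq (D : Vec d →L[ℂ] Vec n) {B B' : Finset (Fin d)} (h : B ⊆ B') (z : Vec n) :
    ‖P D B' z - P D B z‖^2 = ‖P D B' z‖^2 - ‖P D B z‖^2 := by
  have hmemB : P D B z ∈ colSpan D B' := colSpan_mono D h (P_mem D B z)
  have horth : ⟪P D B' z - P D B z, P D B z⟫_ℂ = 0 := by
    have h1 : ⟪z - P D B z, P D B z⟫_ℂ = 0 := P_inner D B z (P_mem D B z)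
    have h2 : ⟪z - P D B' z, P D B z⟫_ℂ = 0 := P_inner D B' z hmemB
    have : P D B' z - P D B z = (z - P D B z) - (z - P D B' z) := by abel
    rw [this, inner_sub_left, h1, h2, sub_zero]
  have hp := pyth horth
  rw [sub_add_cancel] at hp
  linarith


lemma sparse_sub {k₁ k₂ : ℕ} {α β : Vec d} (hα : sparse k₁ α) (hβ : sparse k₂ β) :
    sparse (k₁ + k₂) (α - β) := by
  classical
  unfold sparse at *
  refine le_trans (Finset.card_le_card ?_)
    (le_trans (Finset.card_union_le _ _) (add_le_add hα hβ))
  intro i hi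
  rw [Finset.mem_filter] at hi
  rw [Finset.mem_union, Finset.mem_filter, Finset.mem_filter]
  by_contra hcon
  push_neg at hcon
  apply hi.2
  show α i - β i = 0
  rw [hcon.1 (Finset.mem_univ i), hcon.2 (Finset.mem_univ i), sub_zero]

lemma exists_support {k' : ℕ} {γ : Vec d} (h : sparse k' γ)
    (hd : k' ≤ Fintype.card (Fin d)) :
    ∃ Λ : Finset (Fin d), Λ.card = k' ∧ ∀ i, i ∉ Λ → γ i = 0 := by
  classical
  unfold sparse at h
  obtain ⟨Λ, hsub, hcard⟩ := Finset.exists_superset_card_eq h hd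
  refine ⟨Λ, hcard, fun i hi => ?_⟩
  by_contra hne
  exact hi (hsub (Finset.mem_filter.2 ⟨Finset.mem_univ i, hne⟩))

end Aux

open Aux in
theorem stmt4 {m n d k : ℕ} (A : Vec n →L[ℂ] Vec m) (D : Vec d →L[ℂ] Vec n)
    (δ ε₁ : ℝ) (hε₁ : 0 ≤ ε₁) (hRIP : DRIP A D (4 * k) δ)
    (x xl : Vec n) (α β : Vec d)
    (hα : sparse k α) (hx : x = D α) (hβ : sparse k β) (hxl : xl = D β)
    (e : Vec m) (v vt : Vec n) (hv : v = x - xl)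
    (hvt : vt = (ContinuousLinearMap.adjoint A) (A v) + (ContinuousLinearMap.adjoint A) e)
    (Ωopt Ω : Finset (Fin d)) (hΩoptCard : Ωopt.card = 2 * k)
    (hopt : ∀ Λ : Finset (Fin d), Λ.card = 2 * k → ‖vt - P D Ωopt vt‖ ≤ ‖vt - P D Λ vt‖)
    (hΩcard : Ω.card = 2 * k)
    (hnear : ‖P D Ωopt vt - P D Ω vt‖ ≤ ε₁ * ‖P D Ωopt vt‖) :
    ‖v - P D Ω v‖ ≤ ((2 + ε₁) * δ + ε₁) * ‖v‖ + (2 + ε₁) * Real.sqrt (1 + δ) * ‖e‖ := by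
  classical
  by_cases hv0 : v = 0
  · rw [hv0]
    simp only [P_zero, sub_zero, norm_zero, mul_zero, zero_add]
    exact mul_nonneg (mul_nonneg (by linarith) (Real.sqrt_nonneg _)) (norm_nonneg _)
  -- main case
  set γv : Vec d := α - β with hγv
  have hvD : v = D γv := by rw [hv, hx, hxl, ← map_sub]
  have hsp2k : sparse (2 * k) γv := by
    have := sparse_sub hα hβ
    rwa [show k + k = 2 * k by omega] at this
  have h2kd : 2 * k ≤ Fintype.card (Fin d) := hΩoptCard ▸ Finset.card_le_univ Ωopt
  obtain ⟨Λ, hΛcard, hsuppΛ⟩ := exists_support hsp2k h2kd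
  have hvmem : v ∈ colSpan D Λ := hvD ▸ mem_colSpan_of D hsuppΛ
  have hsp : sparse (4 * k) γv := sparse_of_support hsuppΛ (by omega)
  -- δ ≥ 0
  have hvpos : 0 < ‖v‖ := norm_pos_iff.2 hv0
  have hδ0 : 0 ≤ δ := by
    by_contra hneg
    push_neg at hneg
    obtain ⟨h1, h2⟩ := hRIP γv hsp
    rw [← hvD] at h1 h2
    rcases le_or_gt 0 (1 + δ) with hge|hlt
    · have hsq : Real.sqrt (1 - δ) ≤ Real.sqrt (1 + δ) := by
        have hch : Real.sqrt (1 - δ) * ‖v‖ ≤ Real.sqrt (1 + δ) * ‖v‖ := le_trans h1 h2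
        exact le_of_mul_le_mul_right hch hvpos
      have : Real.sqrt (1 + δ) < Real.sqrt (1 - δ) :=
        Real.sqrt_lt_sqrt hge (by linarith)
      linarith
    · have hz : Real.sqrt (1 + δ) = 0 := Real.sqrt_eq_zero_of_nonpos hlt.le
      rw [hz, zero_mul] at h2
      have hpos : 0 < Real.sqrt (1 - δ) * ‖v‖ :=
        mul_pos (Real.sqrt_pos.2 (by linarith)) hvpos
      linarith [le_trans h1 h2]
  -- setup
  set R : Finset (Fin d) := Λ ∪ Ωopt with hR
  have hΛR : Λ ⊆ R := Finset.subset_union_left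
  have hΩoptR : Ωopt ⊆ R := Finset.subset_union_right
  have hRcard : R.card ≤ 4 * k :=
    le_trans (Finset.card_union_le _ _) (by omega)
  set s : ℝ := Real.sqrt (1 + δ) with hs
  have hs0 : 0 ≤ s := Real.sqrt_nonneg _
  set c : ℝ := δ * ‖v‖ + s * ‖e‖ with hc
  have hc0 : 0 ≤ c :=
    add_nonneg (mul_nonneg hδ0 (norm_nonneg _)) (mul_nonneg hs0 (norm_nonneg _))
  set hh : Vec n := vt - v with hhh
  have hvth : vt = v + hh := by rw [hhh]; abel
  -- key projection bound
  have hkey : ∀ B : Finset (Fin d), B ⊆ R → ‖P D B hh‖ ≤ c := by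
    intro B hBR
    set p := P D B hh with hp
    have hpR : p ∈ colSpan D R := colSpan_mono D hBR (P_mem D B hh)
    obtain ⟨γp, hγp, hDp⟩ := exists_of_mem_colSpan D hpR
    have h1 : ⟪hh, p⟫_ℂ = ⟪p, p⟫_ℂ := by
      have h0 := P_inner D B hh (P_mem D B hh)
      rw [inner_sub_left] at h0
      rw [sub_eq_zero] at h0
      exact h0
    have hnormsq : RCLike.re ⟪hh, p⟫_ℂ = ‖p‖^2 := by
      rw [h1]
      exact inner_self_eq_norm_sq p
    have hexp : ⟪hh, p⟫_ℂ = (⟪A v, A p⟫_ℂ - ⟪v, p⟫_ℂ) + ⟪e, A p⟫_ℂ := by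
      rw [hhh, hvt, inner_sub_left, inner_add_left,
        ContinuousLinearMap.adjoint_inner_left, ContinuousLinearMap.adjoint_inner_left]
      ring
    have hcardΛR : (Λ ∪ R).card ≤ 4 * k := by
      rw [Finset.union_eq_right.2 hΛR]
      exact hRcard
    have hAvAp : RCLike.re (⟪A v, A p⟫_ℂ - ⟪v, p⟫_ℂ) ≤ δ * ‖v‖ * ‖p‖ := by
      have := rip_re_inner_bound hRIP hδ0 hcardΛR hsuppΛ hγp
      rw [← hvD, hDp] at this
      exact this
    have hAp : ‖A p‖ ≤ s * ‖p‖ := by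
      have := (hRIP γp (sparse_of_support hγp hRcard)).2
      rw [hDp] at this
      exact this
    have heAp : RCLike.re ⟪e, A p⟫_ℂ ≤ ‖e‖ * ‖A p‖ :=
      le_trans (RCLike.re_le_norm _) (norm_inner_le_norm _ _)
    have hq : ‖p‖^2 ≤ c * ‖p‖ := by
      rw [← hnormsq, hexp, map_add, hc]
      have h5 : ‖e‖ * ‖A p‖ ≤ ‖e‖ * (s * ‖p‖) :=
        mul_le_mul_of_nonneg_left hAp (norm_nonneg _)
      calc RCLike.re (⟪A v, A p⟫_ℂ - ⟪v, p⟫_ℂ) + RCLike.re ⟪e, A p⟫_ℂ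
          ≤ δ * ‖v‖ * ‖p‖ + ‖e‖ * (s * ‖p‖) :=
            add_le_add hAvAp (le_trans heAp h5)
        _ = (δ * ‖v‖ + s * ‖e‖) * ‖p‖ := by ring
    rcases eq_or_lt_of_le (norm_nonneg p) with h0|hppos
    · rw [← h0]; exact hc0
    · rw [pow_two] at hq
      exact le_of_mul_le_mul_right hq hppos
  -- main chain
  have hPΛv : P D Λ v = v := P_eq_self D Λ hvmem
  have hPRv : P D R v = v := P_eq_self D R (colSpan_mono D hΛR hvmem)
  have step1 : ‖v - P D Ω v‖ ≤ ‖v - P D Ω vt‖ := P_min D Ω v (P_mem D Ω vt)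
  have step2 : ‖v - P D Ω vt‖ ≤ ‖v - P D Ωopt vt‖ + ε₁ * ‖P D Ωopt vt‖ := by
    calc ‖v - P D Ω vt‖ = ‖(v - P D Ωopt vt) + (P D Ωopt vt - P D Ω vt)‖ := by
          rw [show (v - P D Ωopt vt) + (P D Ωopt vt - P D Ω vt) = v - P D Ω vt by abel]
      _ ≤ ‖v - P D Ωopt vt‖ + ‖P D Ωopt vt - P D Ω vt‖ := norm_add_le _ _
      _ ≤ _ := by linarith [hnear]
  have step3 : ‖P D Ωopt vt‖ ≤ c + ‖v‖ := by
    calc ‖P D Ωopt vt‖ = ‖P D Ωopt v + P D Ωopt hh‖ := by rw [← P_add, ← hvth]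
      _ ≤ ‖P D Ωopt v‖ + ‖P D Ωopt hh‖ := norm_add_le _ _
      _ ≤ ‖v‖ + c := add_le_add (norm_P_le D Ωopt v) (hkey Ωopt hΩoptR)
      _ = c + ‖v‖ := by ring
  have step4 : ‖v - P D Ωopt vt‖ ≤ 2 * c := by
    have e4 : v - P D Ωopt vt = (- P D R hh) + (P D R vt - P D Ωopt vt) := by
      have h1 : P D R vt = v + P D R hh := by rw [hvth, P_add, hPRv]
      rw [h1]; abel
    have t1 : ‖- P D R hh‖ ≤ c := by
      rw [norm_neg]; exact hkey R Finset.Subset.rfl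
    have hopt' : ‖P D Λ vt‖^2 ≤ ‖P D Ωopt vt‖^2 := by
      have ho := hopt Λ hΛcard
      have hsq : ‖vt - P D Ωopt vt‖^2 ≤ ‖vt - P D Λ vt‖^2 :=
        pow_le_pow_left₀ (norm_nonneg _) ho 2
      have p1 := P_pyth D Ωopt vt
      have p2 := P_pyth D Λ vt
      linarith
    have t2 : ‖P D R vt - P D Ωopt vt‖ ≤ c := by
      have n1 := P_nested_sq D hΩoptR vt
      have n2 := P_nested_sq D hΛR vt
      have hΛRh : P D R vt - P D Λ vt = P D R hh - P D Λ hh := by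
        rw [hvth, P_add, P_add, hPRv, hPΛv]; abel
      have n3 := P_nested_sq D hΛR hh
      have hRh : ‖P D R hh‖ ≤ c := hkey R Finset.Subset.rfl
      have hsq2 : ‖P D R vt - P D Ωopt vt‖^2 ≤ c^2 := by
        rw [n1]
        calc ‖P D R vt‖^2 - ‖P D Ωopt vt‖^2 ≤ ‖P D R vt‖^2 - ‖P D Λ vt‖^2 := by linarith
          _ = ‖P D R vt - P D Λ vt‖^2 := n2.symm
          _ = ‖P D R hh - P D Λ hh‖^2 := by rw [hΛRh]
          _ = ‖P D R hh‖^2 - ‖P D Λ hh‖^2 := n3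
          _ ≤ c^2 := by
              have h6 : ‖P D R hh‖^2 ≤ c^2 := pow_le_pow_left₀ (norm_nonneg _) hRh 2
              have h7 := sq_nonneg ‖P D Λ hh‖
              linarith
      exact le_of_sq_le_sq (norm_nonneg _) hc0 hsq2
    calc ‖v - P D Ωopt vt‖ ≤ ‖- P D R hh‖ + ‖P D R vt - P D Ωopt vt‖ := by
          rw [e4]; exact norm_add_le _ _
      _ ≤ 2 * c := by linarith
  have hfin : ‖v - P D Ω v‖ ≤ 2 * c + ε₁ * (c + ‖v‖) := by
    have h3 : ε₁ * ‖P D Ωopt vt‖ ≤ ε₁ * (c + ‖v‖) :=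
      mul_le_mul_of_nonneg_left step3 hε₁
    linarith [step1, step2, step4]
  calc ‖v - P D Ω v‖ ≤ 2 * c + ε₁ * (c + ‖v‖) := hfin
    _ = ((2 + ε₁) * δ + ε₁) * ‖v‖ + (2 + ε₁) * s * ‖e‖ := by rw [hc]; ring
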